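/- Let σ be a measure on a set Σ, let 𝒟 be a countable family of measurable subsets of Σ such that the maximal elements of any subfamily of 𝒟 are pairwise disjoint and every member of a subfamily is contained in a maximal one (e.g. 𝒟 a dyadic lattice). Let a : 𝒟 → [0, ∞) satisfy the Carleson packing condition Σ_{Q ∈ 𝒟 : Q ⊆ S} a(Q) ≤ A σ(S) for every S ∈ 𝒟, and let b : 𝒟 → [0, ∞). Define b*(ζ) = sup{ b(Q) : Q ∈ 𝒟, ζ ∈ Q } (with sup ∅ = 0). Then Σ_{Q ∈ 𝒟} a(Q) b(Q) ≤ A ∫_Σ b* dσ. -/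

import Mathlib

open MeasureTheory
open scoped ENNReal

theorem stmt_16 (X : Type*) [MeasurableSpace X] (σ : Measure X)
    (𝒟 : Set (Set X)) (h𝒟 : 𝒟.Countable) (hmeas : ∀ Q ∈ 𝒟, MeasurableSet Q)
    (hmax : ∀ 𝒮 : Set (Set X), 𝒮 ⊆ 𝒟 →
      ((∀ P ∈ 𝒮, ∀ P' ∈ 𝒮, (∀ T ∈ 𝒮, P ⊆ T → T = P) → (∀ T ∈ 𝒮, P' ⊆ T → T = P') →
          P ≠ P' → Disjoint P P') ∧
        ∀ Q ∈ 𝒮, ∃ P ∈ 𝒮, Q ⊆ P ∧ ∀ T ∈ 𝒮, P ⊆ T → T = P))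
    (a b : Set X → ℝ≥0∞) (A : ℝ≥0∞)
    (hpack : ∀ S ∈ 𝒟, ∑' Q : {Q : Set X // Q ∈ 𝒟 ∧ Q ⊆ S}, a Q.1 ≤ A * σ S) :
    ∑' Q : 𝒟, a Q.1 * b Q.1 ≤
      A * ∫⁻ ζ, ⨆ Q : {Q : Set X // Q ∈ 𝒟 ∧ ζ ∈ Q}, b Q.1 ∂σ := by
  classical
  haveI : Countable ↥𝒟 := h𝒟.to_subtype
  set g : X → ℝ≥0∞ := fun ζ => ⨆ Q : {Q : Set X // Q ∈ 𝒟 ∧ ζ ∈ Q}, b Q.1 with hg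
  -- measurability of g
  have hg_eq : ∀ ζ, g ζ = ⨆ Q : ↥𝒟, Set.indicator Q.1 (fun _ => b Q.1) ζ := by
    intro ζ
    apply le_antisymm
    · exact iSup_le fun Q => le_iSup_of_le ⟨Q.1, Q.2.1⟩ (by rw [Set.indicator_of_mem Q.2.2])
    · refine iSup_le fun Q => ?_
      by_cases hζ : ζ ∈ Q.1
      · rw [Set.indicator_of_mem hζ]
        exact le_iSup (fun (R : {R : Set X // R ∈ 𝒟 ∧ ζ ∈ R}) => b R.1) ⟨Q.1, Q.2, hζ⟩
      · rw [Set.indicator_of_notMem hζ]; exact zero_le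
  have hg_meas : Measurable g := by
    rw [show g = fun ζ => ⨆ Q : ↥𝒟, Set.indicator Q.1 (fun _ => b Q.1) ζ from funext hg_eq]
    exact Measurable.iSup fun Q => Measurable.indicator measurable_const (hmeas Q.1 Q.2)
  -- key estimate for a fixed level lam
  have key : ∀ lam : ℝ≥0∞,
      (∑' Q : ↥𝒟, if lam < b Q.1 then a Q.1 else 0) ≤ A * σ {ζ | lam < g ζ} := by
    intro lam
    set 𝒮 : Set (Set X) := {Q | Q ∈ 𝒟 ∧ lam < b Q} with h𝒮
    have h𝒮𝒟 : 𝒮 ⊆ 𝒟 := fun Q hQ => hQ.1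
    obtain ⟨hdisj, hcov⟩ := hmax 𝒮 h𝒮𝒟
    set ℳ : Set (Set X) := {P | P ∈ 𝒮 ∧ ∀ T ∈ 𝒮, P ⊆ T → T = P} with hℳ
    haveI : Countable ↥ℳ := (h𝒟.mono (fun P hP => h𝒮𝒟 hP.1)).to_subtype
    set s : Set ↥𝒟 := {Q : ↥𝒟 | lam < b Q.1} with hs
    have hsupp : Function.support (fun Q : ↥𝒟 => if lam < b Q.1 then a Q.1 else 0) ⊆ s := by
      intro Q hQ
      by_contra h
      exact hQ (if_neg h)
    rw [← tsum_subtype_eq_of_support_subset hsupp]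
    have hsum : ∑' x : ↥s, (if lam < b x.1.1 then a x.1.1 else 0) = ∑' x : ↥s, a x.1.1 :=
      tsum_congr fun x => if_pos x.2
    rw [hsum]
    have hPex : ∀ x : ↥s, ∃ P ∈ 𝒮, x.1.1 ⊆ P ∧ ∀ T ∈ 𝒮, P ⊆ T → T = P :=
      fun x => hcov x.1.1 ⟨x.1.2, x.2⟩
    choose P hP𝒮 hQP hPmax using hPex
    have hPℳ : ∀ x, P x ∈ ℳ := fun x => ⟨hP𝒮 x, hPmax x⟩
    let i : ↥s → (P : ↥ℳ) × {Q : Set X // Q ∈ 𝒟 ∧ Q ⊆ P.1} :=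
      fun x => ⟨⟨P x, hPℳ x⟩, ⟨x.1.1, x.1.2, hQP x⟩⟩
    have hi : Function.Injective i := by
      intro x y hxy
      have h1 : x.1.1 = y.1.1 :=
        congrArg (fun z : (P : ↥ℳ) × {Q : Set X // Q ∈ 𝒟 ∧ Q ⊆ P.1} => z.2.1) hxy
      exact Subtype.ext (Subtype.ext h1)
    have hpd : ℳ.PairwiseDisjoint id := fun P₁ hP₁ P₂ hP₂ hne =>
      hdisj P₁ hP₁.1 P₂ hP₂.1 hP₁.2 hP₂.2 hne
    have hUsub : (⋃ P ∈ ℳ, id P) ⊆ {ζ | lam < g ζ} := by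
      intro ζ hζ
      simp only [Set.mem_iUnion, id] at hζ
      obtain ⟨P₀, hP₀, hζP₀⟩ := hζ
      have hb : lam < b P₀ := hP₀.1.2
      have hle : b P₀ ≤ g ζ := by
        rw [hg]
        exact le_iSup (fun (R : {R : Set X // R ∈ 𝒟 ∧ ζ ∈ R}) => b R.1) ⟨P₀, h𝒮𝒟 hP₀.1, hζP₀⟩
      exact lt_of_lt_of_le hb hle
    calc ∑' x : ↥s, a x.1.1
        = ∑' x : ↥s, (fun y : (P : ↥ℳ) × {Q : Set X // Q ∈ 𝒟 ∧ Q ⊆ P.1} => a y.2.1) (i x) := rfl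
      _ ≤ ∑' y : (P : ↥ℳ) × {Q : Set X // Q ∈ 𝒟 ∧ Q ⊆ P.1}, a y.2.1 :=
          ENNReal.tsum_comp_le_tsum_of_injective hi _
      _ = ∑' (P : ↥ℳ) (Q : {Q : Set X // Q ∈ 𝒟 ∧ Q ⊆ P.1}), a Q.1 := ENNReal.tsum_sigma' _
      _ ≤ ∑' P : ↥ℳ, A * σ P.1 := ENNReal.tsum_le_tsum fun P => hpack P.1 (h𝒮𝒟 P.2.1)
      _ = A * ∑' P : ↥ℳ, σ (id P.1) := ENNReal.tsum_mul_left
      _ = A * σ (⋃ P ∈ ℳ, id P) := by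
          rw [measure_biUnion (h𝒟.mono (fun P hP => h𝒮𝒟 hP.1)) hpd
            (fun P hP => hmeas P (h𝒮𝒟 hP.1))]
      _ ≤ A * σ {ζ | lam < g ζ} := mul_le_mul_right (measure_mono hUsub) _
  -- layer-cake representation of each term
  have hSmeas : ∀ Q : ↥𝒟, MeasurableSet {t : ℝ | ENNReal.ofReal t < b Q.1} :=
    fun Q => measurableSet_lt ENNReal.measurable_ofReal measurable_const
  have hab : ∀ Q : ↥𝒟, a Q.1 * b Q.1
      = ∫⁻ t in Set.Ioi (0:ℝ), ({t : ℝ | ENNReal.ofReal t < b Q.1}).indicator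
          (fun _ => a Q.1) t := by
    intro Q
    rw [lintegral_indicator (hSmeas Q), setLIntegral_const,
      Measure.restrict_apply (hSmeas Q)]
    congr 1
    by_cases hb : b Q.1 = ∞
    · have : {t : ℝ | ENNReal.ofReal t < b Q.1} ∩ Set.Ioi 0 = Set.Ioi 0 := by
        rw [Set.inter_eq_right]
        intro t _
        simp [hb]
      rw [this, Real.volume_Ioi, hb]
    · have : {t : ℝ | ENNReal.ofReal t < b Q.1} ∩ Set.Ioi 0 = Set.Ioo 0 (b Q.1).toReal := by
        ext t
        simp only [Set.mem_inter_iff, Set.mem_setOf_eq, Set.mem_Ioi, Set.mem_Ioo]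
        constructor
        · rintro ⟨h1, h2⟩
          exact ⟨h2, (ENNReal.ofReal_lt_iff_lt_toReal h2.le hb).1 h1⟩
        · rintro ⟨h1, h2⟩
          exact ⟨(ENNReal.ofReal_lt_iff_lt_toReal h1.le hb).2 h2, h1⟩
      rw [this, Real.volume_Ioo, sub_zero, ENNReal.ofReal_toReal hb]
  -- antitone measure function
  have hanti : Antitone (fun t : ℝ => σ {ζ | ENNReal.ofReal t < g ζ}) := by
    intro t t' htt'
    exact measure_mono fun ζ hζ =>
      lt_of_le_of_lt (ENNReal.ofReal_le_ofReal htt') hζ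
  -- final layer-cake inequality on the right
  have hfinal : ∫⁻ t in Set.Ioi (0:ℝ), σ {ζ | ENNReal.ofReal t < g ζ} ≤ ∫⁻ ζ, g ζ ∂σ := by
    by_cases htop : ∫⁻ ζ, g ζ ∂σ = ∞
    · rw [htop]; exact le_top
    have hae : ∀ᵐ ζ ∂σ, g ζ < ∞ := ae_lt_top hg_meas htop
    have h0 : σ {ζ | g ζ = ∞} = 0 := by
      have : {ζ | g ζ = ∞} ⊆ {ζ | ¬ g ζ < ∞} := fun ζ hζ => by
        simp only [Set.mem_setOf_eq] at hζ ⊢; simp [hζ]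
      exact measure_mono_null this hae
    have hreal : ∫⁻ ζ, g ζ ∂σ = ∫⁻ ζ, ENNReal.ofReal ((g ζ).toReal) ∂σ := by
      apply lintegral_congr_ae
      filter_upwards [hae] with ζ hζ
      rw [ENNReal.ofReal_toReal hζ.ne]
    rw [hreal, lintegral_eq_lintegral_meas_lt σ (Filter.Eventually.of_forall
      fun ζ => ENNReal.toReal_nonneg) hg_meas.ennreal_toReal.aemeasurable]
    refine lintegral_mono_ae ?_
    filter_upwards [ae_restrict_mem measurableSet_Ioi] with t ht
    calc σ {ζ | ENNReal.ofReal t < g ζ}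
        ≤ σ ({ζ | t < (g ζ).toReal} ∪ {ζ | g ζ = ∞}) := by
          apply measure_mono
          intro ζ hζ
          by_cases hfin : g ζ = ∞
          · exact Or.inr hfin
          · exact Or.inl ((ENNReal.ofReal_lt_iff_lt_toReal (le_of_lt ht) hfin).1 hζ)
      _ ≤ σ {ζ | t < (g ζ).toReal} + σ {ζ | g ζ = ∞} := measure_union_le _ _
      _ = σ {ζ | t < (g ζ).toReal} := by rw [h0, add_zero]
  -- put everything together
  calc ∑' Q : ↥𝒟, a Q.1 * b Q.1
      = ∑' Q : ↥𝒟, ∫⁻ t in Set.Ioi (0:ℝ),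
          ({t : ℝ | ENNReal.ofReal t < b Q.1}).indicator (fun _ => a Q.1) t := tsum_congr hab
    _ = ∫⁻ t in Set.Ioi (0:ℝ), ∑' Q : ↥𝒟,
          ({t : ℝ | ENNReal.ofReal t < b Q.1}).indicator (fun _ => a Q.1) t :=
        (lintegral_tsum fun Q => (measurable_const.indicator (hSmeas Q)).aemeasurable).symm
    _ ≤ ∫⁻ t in Set.Ioi (0:ℝ), A * σ {ζ | ENNReal.ofReal t < g ζ} := by
        apply lintegral_mono
        intro t
        refine le_trans (le_of_eq (tsum_congr fun Q => ?_)) (key (ENNReal.ofReal t))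
        simp only [Set.indicator_apply, Set.mem_setOf_eq]
    _ = A * ∫⁻ t in Set.Ioi (0:ℝ), σ {ζ | ENNReal.ofReal t < g ζ} :=
        lintegral_const_mul A hanti.measurable
    _ ≤ A * ∫⁻ ζ, g ζ ∂σ := mul_le_mul_right hfinal _
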